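/- Let 𝓗 be a finite hypergraph on a finite set V (all hyperedges nonempty). Then {x ∈ ℕ^V : 𝓣_𝓗(x) = 0} = {x ∈ ℕ^V : 𝓖_𝓗(x) = 0} if and only if 𝓗 satisfies condition (*): for every S ⊆ V with 𝓗_S ≠ ∅ there exists H ∈ 𝓗_S such that H ∩ H' ≠ ∅ for all H' ∈ 𝓗_S. -/

import Mathlib

/-- The minimum excludant of a set of natural numbers. -/
noncomputable def mex (S : Set ℕ) : ℕ := sInf {n : ℕ | n ∉ S}

open Classical in
/-- The Sprague–Grundy function of the impartial game with move relation `move`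
(meaningful when every play is finite, i.e. the reversed move relation is
well-founded): it satisfies `sgFun move x = mex {sgFun move y | move x y}`. -/
noncomputable def sgFun {X : Type*} (move : X → X → Prop) : X → ℕ :=
  if hwf : WellFounded (fun y x => move x y) then
    hwf.fix (fun x ih => mex {v : ℕ | ∃ (y : X) (h : move x y), ih y h = v})
  else fun _ => 0

open Classical in
/-- The Tetris function: the length of a longest play starting at `x`
(meaningful when every play is finite and the game is finitely branching):
it satisfies `tetrisFun move x = sup {tetrisFun move y + 1 | move x y}`. -/
noncomputable def tetrisFun {X : Type*} (move : X → X → Prop) : X → ℕ :=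
  if hwf : WellFounded (fun y x => move x y) then
    hwf.fix (fun x ih => sSup {v : ℕ | ∃ (y : X) (h : move x y), v = ih y h + 1})
  else fun _ => 0

/-- A game is SG decreasing if every move strictly decreases the SG value. -/
def SGDecreasing {X : Type*} (move : X → X → Prop) : Prop :=
  ∀ x y, move x y → sgFun move y < sgFun move x

/-- The move relation of the game `NIM_𝓗` on positions `ℕ^V`. -/
def nimMove {V : Type*} (𝓗 : Set (Finset V)) (x x' : V → ℕ) : Prop :=
  ∃ H ∈ 𝓗, (∀ i ∈ H, x' i < x i) ∧ ∀ i ∉ H, x' i = x i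

/-- A hypergraph is Tetris if `NIM_𝓗` is SG decreasing. -/
def IsTetrisHypergraph {V : Type*} (𝓗 : Set (Finset V)) : Prop :=
  SGDecreasing (nimMove 𝓗)

/-- The move relation of the `𝓗`-combination of the games `move i`. -/
def combMove {V : Type*} {X : V → Type*} (𝓗 : Set (Finset V))
    (move : ∀ i, X i → X i → Prop) (x x' : ∀ i, X i) : Prop :=
  ∃ H ∈ 𝓗, (∀ i ∈ H, move i (x i) (x' i)) ∧ ∀ i ∉ H, x' i = x i

/-- Condition (*): every nonempty induced subhypergraph has a hyperedge
intersecting all its hyperedges. -/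
def CondStar {V : Type*} [DecidableEq V] (𝓗 : Set (Finset V)) : Prop :=
  ∀ S : Finset V, (∃ H ∈ 𝓗, H ⊆ S) →
    ∃ H ∈ 𝓗, H ⊆ S ∧ ∀ H' ∈ 𝓗, H' ⊆ S → (H ∩ H').Nonempty

section Aux

variable {X : Type*} {move : X → X → Prop}

lemma sg_eq (hwf : WellFounded (fun y x => move x y)) (x : X) :
    sgFun move x = mex {v : ℕ | ∃ y, move x y ∧ sgFun move y = v} := by
  conv_lhs => rw [sgFun, dif_pos hwf, WellFounded.fix_eq]
  congr 1
  ext v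
  simp only [Set.mem_setOf_eq]
  constructor
  · rintro ⟨y, h, rfl⟩
    exact ⟨y, h, by rw [sgFun, dif_pos hwf]⟩
  · rintro ⟨y, h, rfl⟩
    exact ⟨y, h, by rw [sgFun, dif_pos hwf]⟩

lemma tetris_eq (hwf : WellFounded (fun y x => move x y)) (x : X) :
    tetrisFun move x = sSup {v : ℕ | ∃ y, move x y ∧ v = tetrisFun move y + 1} := by
  conv_lhs => rw [tetrisFun, dif_pos hwf, WellFounded.fix_eq]
  congr 1
  ext v
  simp only [Set.mem_setOf_eq]
  constructor
  · rintro ⟨y, h, rfl⟩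
    exact ⟨y, h, by rw [tetrisFun, dif_pos hwf]⟩
  · rintro ⟨y, h, rfl⟩
    exact ⟨y, h, by rw [tetrisFun, dif_pos hwf]⟩

lemma mex_zero_of_notMem {S : Set ℕ} (h : 0 ∉ S) : mex S = 0 :=
  Nat.sInf_eq_zero.mpr (Or.inl h)

lemma mex_ne_zero {S : Set ℕ} (h0 : 0 ∈ S) (hb : ∃ n, n ∉ S) : mex S ≠ 0 := by
  intro h
  have := Nat.sInf_mem (s := {n | n ∉ S}) hb
  rw [mex] at h
  rw [h] at this
  exact this h0

lemma sg_zero_of_no_move (hwf : WellFounded (fun y x => move x y)) {x : X}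
    (h : ¬∃ y, move x y) : sgFun move x = 0 := by
  rw [sg_eq hwf]
  exact mex_zero_of_notMem (by rintro ⟨y, hy, -⟩; exact h ⟨y, hy⟩)

lemma tetris_zero_of_no_move (hwf : WellFounded (fun y x => move x y)) {x : X}
    (h : ¬∃ y, move x y) : tetrisFun move x = 0 := by
  rw [tetris_eq hwf]
  have he : {v : ℕ | ∃ y, move x y ∧ v = tetrisFun move y + 1} = ∅ := by
    ext v
    simp only [Set.mem_setOf_eq, Set.mem_empty_iff_false, iff_false]
    rintro ⟨y, hy, -⟩
    exact h ⟨y, hy⟩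
  rw [he]
  exact csSup_empty

end Aux

set_option linter.unusedSectionVars false
section Nim

variable {V : Type*} [Fintype V] [DecidableEq V] {𝓗 : Set (Finset V)}

lemma nim_sum_lt (hne : ∀ H ∈ 𝓗, H.Nonempty) {x y : V → ℕ}
    (h : nimMove 𝓗 x y) : ∑ i, y i < ∑ i, x i := by
  obtain ⟨H, hH, h1, h2⟩ := h
  obtain ⟨j, hj⟩ := hne H hH
  refine Finset.sum_lt_sum (fun i _ => ?_) ⟨j, Finset.mem_univ j, h1 j hj⟩
  by_cases hi : i ∈ H
  · exact (h1 i hi).le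
  · exact (h2 i hi).le

lemma nim_wf (hne : ∀ H ∈ 𝓗, H.Nonempty) :
    WellFounded (fun y x : V → ℕ => nimMove 𝓗 x y) :=
  Subrelation.wf (r := InvImage (· < ·) (fun x : V → ℕ => ∑ i, x i))
    (fun h => nim_sum_lt hne h)
    (InvImage.wf (fun x : V → ℕ => ∑ i, x i) Nat.lt_wfRel.wf)

lemma nim_tetris_le (hne : ∀ H ∈ 𝓗, H.Nonempty) (x : V → ℕ) :
    tetrisFun (nimMove 𝓗) x ≤ ∑ i, x i := by
  induction x using (nim_wf hne).induction with
  | _ x ih =>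
    rw [tetris_eq (nim_wf hne)]
    refine csSup_le' ?_
    rintro v ⟨y, hy, rfl⟩
    exact Nat.succ_le_of_lt (lt_of_le_of_lt (ih y hy) (nim_sum_lt hne hy))

lemma nim_sg_le (hne : ∀ H ∈ 𝓗, H.Nonempty) (x : V → ℕ) :
    sgFun (nimMove 𝓗) x ≤ ∑ i, x i := by
  induction x using (nim_wf hne).induction with
  | _ x ih =>
    rw [sg_eq (nim_wf hne)]
    refine Nat.sInf_le ?_
    simp only [Set.mem_setOf_eq]
    rintro ⟨y, hy, h⟩
    exact (lt_of_le_of_lt (ih y hy) (nim_sum_lt hne hy)).ne h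

lemma nim_tetris_ne_zero (hne : ∀ H ∈ 𝓗, H.Nonempty) {x y : V → ℕ}
    (h : nimMove 𝓗 x y) : tetrisFun (nimMove 𝓗) x ≠ 0 := by
  rw [tetris_eq (nim_wf hne)]
  have hb : BddAbove {v : ℕ | ∃ y, nimMove 𝓗 x y ∧ v = tetrisFun (nimMove 𝓗) y + 1} := by
    refine ⟨∑ i, x i, ?_⟩
    rintro v ⟨y', hy', rfl⟩
    exact Nat.succ_le_of_lt (lt_of_le_of_lt (nim_tetris_le hne y') (nim_sum_lt hne hy'))
  have := le_csSup hb (⟨y, h, rfl⟩ :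
    tetrisFun (nimMove 𝓗) y + 1 ∈ {v : ℕ | ∃ y, nimMove 𝓗 x y ∧ v = tetrisFun (nimMove 𝓗) y + 1})
  omega

lemma nim_move_exists_iff {x : V → ℕ} :
    (∃ y, nimMove 𝓗 x y) ↔ ∃ H ∈ 𝓗, ∀ i ∈ H, x i ≠ 0 := by
  constructor
  · rintro ⟨y, H, hH, h1, h2⟩
    exact ⟨H, hH, fun i hi => by have := h1 i hi; omega⟩
  · rintro ⟨H, hH, hpos⟩
    refine ⟨fun i => if i ∈ H then 0 else x i, H, hH, fun i hi => ?_, fun i hi => ?_⟩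
    · simp only [if_pos hi]
      exact Nat.pos_of_ne_zero (hpos i hi)
    · simp only [if_neg hi]

end Nim


theorem stmt6 {V : Type*} [Fintype V] [DecidableEq V]
    (𝓗 : Set (Finset V)) (hne : ∀ H ∈ 𝓗, H.Nonempty) :
    {x : V → ℕ | tetrisFun (nimMove 𝓗) x = 0}
      = {x : V → ℕ | sgFun (nimMove 𝓗) x = 0} ↔ CondStar 𝓗 := by
  have hwf := nim_wf hne
  constructor
  · intro heq S hS
    obtain ⟨H₀, hH₀, hsub⟩ := hS
    set x : V → ℕ := fun i => if i ∈ S then 1 else 0 with hxdef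
    have hxpos : ∀ i ∈ S, x i ≠ 0 := fun i hi => by simp [hxdef, hi]
    have hmov : ∃ y, nimMove 𝓗 x y :=
      nim_move_exists_iff.mpr ⟨H₀, hH₀, fun i hi => hxpos i (hsub hi)⟩
    obtain ⟨y₀, hy₀⟩ := hmov
    have ht : tetrisFun (nimMove 𝓗) x ≠ 0 := nim_tetris_ne_zero hne hy₀
    have hs : sgFun (nimMove 𝓗) x ≠ 0 := by
      intro h
      have hx : x ∈ {x : V → ℕ | sgFun (nimMove 𝓗) x = 0} := h
      rw [← heq] at hx
      exact ht hx
    -- 0 must be an attained SG value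
    have h0 : (0 : ℕ) ∈ {v : ℕ | ∃ y, nimMove 𝓗 x y ∧ sgFun (nimMove 𝓗) y = v} := by
      by_contra h0
      exact hs ((sg_eq hwf x).trans (mex_zero_of_notMem h0))
    obtain ⟨y, hxy, hsgy⟩ := h0
    have hty : tetrisFun (nimMove 𝓗) y = 0 := by
      have : y ∈ {x : V → ℕ | sgFun (nimMove 𝓗) x = 0} := hsgy
      rw [← heq] at this
      exact this
    have hyno : ¬∃ z, nimMove 𝓗 y z := fun ⟨z, hz⟩ => nim_tetris_ne_zero hne hz hty
    obtain ⟨H, hH, h1, h2⟩ := hxy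
    have hHS : H ⊆ S := by
      intro i hi
      have := h1 i hi
      by_contra hiS
      simp [hxdef, hiS] at this
    refine ⟨H, hH, hHS, fun H' hH' hH'S => ?_⟩
    by_contra hemp
    rw [Finset.not_nonempty_iff_eq_empty] at hemp
    apply hyno
    refine nim_move_exists_iff.mpr ⟨H', hH', fun i hi => ?_⟩
    have hiH : i ∉ H := fun hiH => by
      have : i ∈ H ∩ H' := Finset.mem_inter.mpr ⟨hiH, hi⟩
      simp [hemp] at this
    rw [h2 i hiH]
    exact hxpos i (hH'S hi)
  · intro hstar
    ext x
    simp only [Set.mem_setOf_eq]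
    constructor
    · intro ht
      have hno : ¬∃ y, nimMove 𝓗 x y := fun ⟨y, hy⟩ => nim_tetris_ne_zero hne hy ht
      exact sg_zero_of_no_move hwf hno
    · intro hg
      by_contra ht
      have hmov : ∃ y, nimMove 𝓗 x y := by
        by_contra h
        exact ht (tetris_zero_of_no_move hwf h)
      obtain ⟨H₀, hH₀, hpos⟩ := nim_move_exists_iff.mp hmov
      set S : Finset V := Finset.univ.filter (fun i => x i ≠ 0) with hSdef
      have hmemS : ∀ i, i ∈ S ↔ x i ≠ 0 := fun i => by simp [hSdef]
      obtain ⟨H, hH, hHS, hint⟩ :=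
        hstar S ⟨H₀, hH₀, fun i hi => (hmemS i).mpr (hpos i hi)⟩
      set y : V → ℕ := fun i => if i ∈ H then 0 else x i with hydef
      have hmv : nimMove 𝓗 x y := by
        refine ⟨H, hH, fun i hi => ?_, fun i hi => ?_⟩
        · simp only [hydef, if_pos hi]
          exact Nat.pos_of_ne_zero ((hmemS i).mp (hHS hi))
        · simp only [hydef, if_neg hi]
      have hyno : ¬∃ z, nimMove 𝓗 y z := by
        rw [nim_move_exists_iff]
        rintro ⟨H', hH', hpos'⟩
        have hsub' : H' ⊆ S := by
          intro i hi
          have := hpos' i hi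
          rw [hmemS]
          intro hxi
          simp [hydef, hxi] at this
        obtain ⟨j, hj⟩ := hint H' hH' hsub'
        rw [Finset.mem_inter] at hj
        have := hpos' j hj.2
        simp [hydef, hj.1] at this
      have hsgy : sgFun (nimMove 𝓗) y = 0 := sg_zero_of_no_move hwf hyno
      rw [sg_eq hwf] at hg
      have h0 : (0 : ℕ) ∈ {v : ℕ | ∃ y, nimMove 𝓗 x y ∧ sgFun (nimMove 𝓗) y = v} :=
        ⟨y, hmv, hsgy⟩
      have hb : (∑ i, x i) ∉ {v : ℕ | ∃ y, nimMove 𝓗 x y ∧ sgFun (nimMove 𝓗) y = v} := by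
        rintro ⟨y', hy', h⟩
        exact (lt_of_le_of_lt (nim_sg_le hne y') (nim_sum_lt hne hy')).ne h
      exact mex_ne_zero h0 ⟨∑ i, x i, hb⟩ hg
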